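/- Combining counts: with {|φ_x⟩}_{x∈{0,1}ⁿ} orthonormal in ℂ²⊗H and Paulis on the first qubit, ∑_{a,b∈{0,1}ⁿ} ∑_{U∈{I,X,Y,Z}} |⟨φ_a|U|φ_b⟩|² · 2^r·C(n−|a⊕b|, r) ≤ 2^{n+r+2}·C(n,r)·(1 − r/(2n)). -/

import Mathlib

/-- Inner product ⟨φ|ψ⟩ (conjugate-linear in the first argument). -/
noncomputable def ip {α : Type*} [Fintype α] (φ ψ : α → ℂ) : ℂ :=
  ∑ x, (starRingEnd ℂ) (φ x) * ψ x

/-- Entries of the Pauli matrices: `pmat 0` = I, `pmat 1` = X, `pmat 2` = Y, `pmat 3` = Z. -/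
def pmat (u : Fin 4) (a b : Fin 2) : ℂ :=
  if u = 0 then (if a = b then 1 else 0)
  else if u = 1 then (if a = b then 0 else 1)
  else if u = 2 then
    (if a = 0 ∧ b = 1 then Complex.I else if a = 1 ∧ b = 0 then -Complex.I else 0)
  else (if a = b then (if a = 0 then 1 else -1) else 0)

/-- The Pauli operator `U ⊗ id` acting on the first qubit of ℂ²⊗H. -/
noncomputable def papply {H : Type*} (u : Fin 4) (ψ : Fin 2 × H → ℂ) : Fin 2 × H → ℂ :=
  fun p => ∑ a : Fin 2, pmat u p.1 a * ψ (a, p.2)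

open Finset

lemma ip_eq_inner {α : Type*} [Fintype α] (f g : α → ℂ) :
    ip f g = inner (𝕜 := ℂ) ((WithLp.equiv 2 (α → ℂ)).symm f) ((WithLp.equiv 2 (α → ℂ)).symm g) := by
  simp [ip, PiLp.inner_apply, RCLike.inner_apply, mul_comm]

lemma norm_sq_toE {α : Type*} [Fintype α] (f : α → ℂ) :
    ‖(WithLp.equiv 2 (α → ℂ)).symm f‖ ^ 2 = ∑ x, Complex.normSq (f x) := by
  rw [EuclideanSpace.norm_eq, Real.sq_sqrt (by positivity)]
  simp [Complex.normSq_eq_norm_sq]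

lemma papply_normSq {m : ℕ} (u : Fin 4) (ψ : Fin 2 × Fin m → ℂ) :
    ∑ x, Complex.normSq (papply u ψ x) = ∑ x, Complex.normSq (ψ x) := by
  rw [Fintype.sum_prod_type, Fintype.sum_prod_type, Fin.sum_univ_two, Fin.sum_univ_two]
  fin_cases u <;>
    simp (config := { decide := true }) [papply, pmat, Fin.sum_univ_two, Complex.normSq_mul] <;>
    ring

lemma bessel {n m : ℕ} (φ : (Fin n → Bool) → Fin 2 × Fin m → ℂ)
    (hortho : ∀ x y, ip (φ x) (φ y) = if x = y then 1 else 0)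
    (ψ : Fin 2 × Fin m → ℂ) :
    ∑ a : Fin n → Bool, Complex.normSq (ip (φ a) ψ) ≤ ∑ x, Complex.normSq (ψ x) := by
  have hON : Orthonormal ℂ (fun x => (WithLp.equiv 2 (Fin 2 × Fin m → ℂ)).symm (φ x)) := by
    rw [orthonormal_iff_ite]
    intro i j
    rw [← ip_eq_inner]
    exact hortho i j
  have h := hON.sum_inner_products_le (s := univ) ((WithLp.equiv 2 (Fin 2 × Fin m → ℂ)).symm ψ)
  rw [norm_sq_toE] at h
  refine le_trans (le_of_eq ?_) h
  refine Finset.sum_congr rfl fun a _ => ?_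
  rw [← ip_eq_inner]
  simp [Complex.normSq_eq_norm_sq]

lemma diag_bound {m : ℕ} (ψ : Fin 2 × Fin m → ℂ)
    (h1 : ∑ x, Complex.normSq (ψ x) = 1) :
    ∑ u : Fin 4, Complex.normSq (ip ψ (papply u ψ)) ≤ 2 := by
  have key : ∀ u, ip ψ (papply u ψ)
      = ∑ i : Fin 2, ∑ j : Fin 2, pmat u i j * ip (fun k => ψ (i,k)) (fun k => ψ (j,k)) := by
    intro u
    rw [ip, Fintype.sum_prod_type]
    refine Finset.sum_congr rfl fun i _ => ?_
    calc ∑ k, (starRingEnd ℂ) (ψ (i,k)) * papply u ψ (i,k)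
        = ∑ k, ∑ j : Fin 2, pmat u i j * ((starRingEnd ℂ) (ψ (i,k)) * ψ (j,k)) := by
          refine Finset.sum_congr rfl fun k _ => ?_
          rw [papply, Finset.mul_sum]
          exact Finset.sum_congr rfl fun j _ => by ring
      _ = _ := by
          rw [Finset.sum_comm]
          exact Finset.sum_congr rfl fun j _ => by rw [ip, Finset.mul_sum]
  set t0 : ℝ := ∑ k, Complex.normSq (ψ (0,k)) with ht0
  set t1 : ℝ := ∑ k, Complex.normSq (ψ (1,k)) with ht1
  set c : ℂ := ip (fun k => ψ (0,k)) (fun k => ψ (1,k)) with hc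
  have hsum : t0 + t1 = 1 := by
    rw [ht0, ht1, ← h1, Fintype.sum_prod_type, Fin.sum_univ_two]
  have h00 : ip (fun k => ψ (0,k)) (fun k => ψ (0,k)) = (t0 : ℂ) := by
    rw [ip, ht0]; push_cast
    exact Finset.sum_congr rfl fun k _ => by rw [mul_comm, Complex.mul_conj]
  have h11 : ip (fun k => ψ (1,k)) (fun k => ψ (1,k)) = (t1 : ℂ) := by
    rw [ip, ht1]; push_cast
    exact Finset.sum_congr rfl fun k _ => by rw [mul_comm, Complex.mul_conj]
  have h10 : ip (fun k => ψ (1,k)) (fun k => ψ (0,k)) = (starRingEnd ℂ) c := by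
    rw [hc, ip, ip, map_sum]
    refine Finset.sum_congr rfl fun k _ => ?_
    rw [map_mul, Complex.conj_conj]
    ring
  have hcs : Complex.normSq c ≤ t0 * t1 := by
    have h := norm_inner_le_norm (𝕜 := ℂ)
      ((WithLp.equiv 2 (Fin m → ℂ)).symm (fun k => ψ (0,k)))
      ((WithLp.equiv 2 (Fin m → ℂ)).symm (fun k => ψ (1,k)))
    rw [← ip_eq_inner, ← hc] at h
    have h2 : ‖c‖ ^ 2 ≤ t0 * t1 := by
      have := mul_le_mul h h (norm_nonneg c) (by positivity)
      calc ‖c‖ ^ 2 = ‖c‖ * ‖c‖ := sq (‖c‖) ▸ by ring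
        _ ≤ _ := this
        _ = t0 * t1 := by
            have e0 := norm_sq_toE (fun k => ψ (0,k))
            have e1 := norm_sq_toE (fun k => ψ (1,k))
            rw [ht0, ht1, ← e0, ← e1]; ring
    calc Complex.normSq c = ‖c‖ ^ 2 := by
          simp [Complex.normSq_eq_norm_sq]
      _ ≤ t0 * t1 := h2
  rw [Fin.sum_univ_four]
  simp only [key, Fin.sum_univ_two]
  simp (config := { decide := true }) only [pmat, if_true, if_false, reduceIte]
  rw [h00, h11, h10]
  simp only [one_mul, zero_mul, neg_mul, mul_zero, add_zero, zero_add, mul_one, mul_neg]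
  have hre : Complex.normSq c = c.re * c.re + c.im * c.im := Complex.normSq_apply c
  simp only [Complex.normSq_apply, Complex.add_re, Complex.add_im, Complex.sub_re,
    Complex.sub_im, Complex.neg_re, Complex.neg_im, Complex.mul_re, Complex.mul_im,
    Complex.I_re, Complex.I_im, Complex.conj_re, Complex.conj_im, Complex.ofReal_re,
    Complex.ofReal_im]
  rw [hre] at hcs
  nlinarith [hcs, hsum, sq_nonneg (t0 - t1), sq_nonneg (t0 + t1)]

/-- For an orthonormal family {|φ_x⟩}_{x∈{0,1}ⁿ} in ℂ²⊗H (Paulis on the first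
qubit) and 1 ≤ r ≤ n:
∑_{a,b}∑_U |⟨φ_a|U|φ_b⟩|² · 2^r·C(n−|a⊕b|, r) ≤ 2^{n+r+2}·C(n,r)·(1 − r/(2n)). -/
theorem weighted_orthonormal_pauli_sum {n m : ℕ} (r : ℕ) (hr1 : 1 ≤ r) (hrn : r ≤ n)
    (φ : (Fin n → Bool) → Fin 2 × Fin m → ℂ)
    (hortho : ∀ x y, ip (φ x) (φ y) = if x = y then 1 else 0) :
    ∑ a : Fin n → Bool, ∑ b : Fin n → Bool, ∑ u : Fin 4,
        Complex.normSq (ip (φ a) (papply u (φ b))) *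
          ((2 : ℝ) ^ r *
            ((n - (Finset.univ.filter fun j => a j ≠ b j).card).choose r : ℝ))
      ≤ 2 ^ (n + r + 2) * (n.choose r : ℝ) * (1 - (r : ℝ) / (2 * n)) := by
  classical
  have hn : 0 < n := lt_of_lt_of_le hr1 hrn
  have hAB : (n.choose r : ℝ) = ((n-1).choose r : ℝ) + ((n-1).choose (r-1) : ℝ) := by
    have h := Nat.choose_succ_succ (n-1) (r-1)
    rw [Nat.succ_eq_add_one, Nat.succ_eq_add_one, Nat.sub_add_cancel hn,
      Nat.sub_add_cancel hr1] at h
    rw [h]; push_cast; ring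
  have hId : (r:ℝ) * (n.choose r : ℝ) = (n:ℝ) * ((n-1).choose (r-1) : ℝ) := by
    have h := Nat.add_one_mul_choose_eq (n-1) (r-1)
    rw [Nat.sub_add_cancel hn,
      Nat.sub_add_cancel hr1] at h
    have h2 : ((n * (n-1).choose (r-1) : ℕ) : ℝ) = ((n.choose r * r : ℕ) : ℝ) := by rw [h]
    push_cast at h2; linarith
  have hnorm1 : ∀ x, ∑ p, Complex.normSq (φ x p) = 1 := by
    intro x
    have h := hortho x x
    rw [if_pos rfl] at h
    have h2 : ((∑ p, Complex.normSq (φ x p) : ℝ) : ℂ) = 1 := by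
      rw [← h, ip]; push_cast
      exact (Finset.sum_congr rfl fun p _ => by rw [mul_comm, Complex.mul_conj]).symm
    exact_mod_cast h2
  set s : (Fin n → Bool) → (Fin n → Bool) → ℝ :=
    fun a b => ∑ u : Fin 4, Complex.normSq (ip (φ a) (papply u (φ b))) with hs
  have hs0 : ∀ a b, 0 ≤ s a b := fun a b =>
    Finset.sum_nonneg fun u _ => Complex.normSq_nonneg _
  have hbessel : ∀ b u,
      ∑ a : Fin n → Bool, Complex.normSq (ip (φ a) (papply u (φ b))) ≤ 1 := by
    intro b u
    calc ∑ a : Fin n → Bool, Complex.normSq (ip (φ a) (papply u (φ b)))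
        ≤ ∑ x, Complex.normSq (papply u (φ b) x) := bessel φ hortho _
      _ = 1 := by rw [papply_normSq]; exact hnorm1 b
  have hdiag : ∀ a, s a a ≤ 2 := fun a => diag_bound (φ a) (hnorm1 a)
  set Wo : ℝ := 2 ^ r * ((n-1).choose r : ℝ) with hWo
  set We : ℝ := 2 ^ r * ((n-1).choose (r-1) : ℝ) with hWe
  have hWo0 : 0 ≤ Wo := by rw [hWo]; positivity
  have hWe0 : 0 ≤ We := by rw [hWe]; positivity
  have hWbound : ∀ a b : Fin n → Bool,
      (2:ℝ)^r * ((n - (Finset.univ.filter fun j => a j ≠ b j).card).choose r : ℝ)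
        ≤ Wo + (if a = b then We else 0) := by
    intro a b
    by_cases hab : a = b
    · subst hab
      rw [if_pos rfl]
      have hcard : (Finset.univ.filter fun j => a j ≠ a j).card = 0 := by simp
      rw [hcard, Nat.sub_zero, hWo, hWe, hAB]
      apply le_of_eq; ring
    · rw [if_neg hab, add_zero, hWo]
      obtain ⟨j, hj⟩ := Function.ne_iff.mp hab
      have hd : 1 ≤ (Finset.univ.filter fun j => a j ≠ b j).card :=
        Finset.card_pos.mpr ⟨j, Finset.mem_filter.mpr ⟨Finset.mem_univ j, hj⟩⟩
      have hch : (n - (Finset.univ.filter fun j => a j ≠ b j).card).choose r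
          ≤ (n-1).choose r := Nat.choose_le_choose r (by omega)
      exact mul_le_mul_of_nonneg_left (Nat.cast_le.mpr hch) (by positivity)
  have hS : (∑ a : Fin n → Bool, ∑ b : Fin n → Bool, s a b) ≤ 2^(n+2) := by
    rw [Finset.sum_comm]
    have hb4 : ∀ b : Fin n → Bool, ∑ a : Fin n → Bool, s a b ≤ 4 := by
      intro b
      rw [show (∑ a : Fin n → Bool, s a b)
          = ∑ u : Fin 4, ∑ a : Fin n → Bool,
              Complex.normSq (ip (φ a) (papply u (φ b))) from Finset.sum_comm]
      calc ∑ u : Fin 4, ∑ a : Fin n → Bool, Complex.normSq (ip (φ a) (papply u (φ b)))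
          ≤ ∑ _u : Fin 4, (1:ℝ) := Finset.sum_le_sum fun u _ => hbessel b u
        _ = 4 := by simp
    calc ∑ b : Fin n → Bool, ∑ a : Fin n → Bool, s a b
        ≤ ∑ _b : Fin n → Bool, (4:ℝ) := Finset.sum_le_sum fun b _ => hb4 b
      _ = 2^n * 4 := by
          rw [Finset.sum_const, Finset.card_univ]
          simp [Fintype.card_fun]
      _ = 2^(n+2) := by ring
  have hD : (∑ a : Fin n → Bool, s a a) ≤ 2^(n+1) := by
    calc ∑ a : Fin n → Bool, s a a ≤ ∑ _a : Fin n → Bool, (2:ℝ) :=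
          Finset.sum_le_sum fun a _ => hdiag a
      _ = 2^n * 2 := by
          rw [Finset.sum_const, Finset.card_univ]
          simp [Fintype.card_fun]
      _ = 2^(n+1) := by ring
  calc ∑ a : Fin n → Bool, ∑ b : Fin n → Bool, ∑ u : Fin 4,
        Complex.normSq (ip (φ a) (papply u (φ b))) *
          ((2 : ℝ) ^ r *
            ((n - (Finset.univ.filter fun j => a j ≠ b j).card).choose r : ℝ))
      = ∑ a : Fin n → Bool, ∑ b : Fin n → Bool, s a b *
          ((2 : ℝ) ^ r *
            ((n - (Finset.univ.filter fun j => a j ≠ b j).card).choose r : ℝ)) := by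
        refine Finset.sum_congr rfl fun a _ => Finset.sum_congr rfl fun b _ => ?_
        exact (Finset.sum_mul _ _ _).symm
    _ ≤ ∑ a : Fin n → Bool, ∑ b : Fin n → Bool,
          s a b * (Wo + if a = b then We else 0) :=
        Finset.sum_le_sum fun a _ => Finset.sum_le_sum fun b _ =>
          mul_le_mul_of_nonneg_left (hWbound a b) (hs0 a b)
    _ = (∑ a : Fin n → Bool, ∑ b : Fin n → Bool, s a b) * Wo
        + (∑ a : Fin n → Bool, s a a) * We := by
        rw [Finset.sum_mul, Finset.sum_mul, ← Finset.sum_add_distrib]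
        refine Finset.sum_congr rfl fun a _ => ?_
        calc ∑ b : Fin n → Bool, s a b * (Wo + if a = b then We else 0)
            = ∑ b : Fin n → Bool,
                (s a b * Wo + if a = b then s a b * We else 0) := by
              refine Finset.sum_congr rfl fun b _ => ?_
              by_cases h : a = b <;> simp [h, mul_add]
          _ = (∑ b : Fin n → Bool, s a b * Wo)
              + ∑ b : Fin n → Bool, (if a = b then s a b * We else 0) :=
              Finset.sum_add_distrib
          _ = (∑ b : Fin n → Bool, s a b) * Wo + s a a * We := by
              rw [Finset.sum_ite_eq, if_pos (Finset.mem_univ a), ← Finset.sum_mul]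
    _ ≤ 2^(n+2) * Wo + 2^(n+1) * We :=
        add_le_add (mul_le_mul_of_nonneg_right hS hWo0)
          (mul_le_mul_of_nonneg_right hD hWe0)
    _ = 2 ^ (n + r + 2) * (n.choose r : ℝ) * (1 - (r : ℝ) / (2 * n)) := by
        have hn' : (n:ℝ) ≠ 0 := Nat.cast_ne_zero.mpr hn.ne'
        have key : (n.choose r:ℝ) * (1 - (r:ℝ)/(2*n))
            = ((n-1).choose r : ℝ) + ((n-1).choose (r-1) : ℝ)/2 := by
          field_simp
          linear_combination 2*(n:ℝ)*hAB - hId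
        rw [mul_assoc, key, hWo, hWe]
        ring
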